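/- (Convergence of federated LoRA with factor-wise averaging, deterministic version with explicit constants.) Let N, T be positive integers, η > 0, and W₀ ∈ ℝ^{d×d}. For i = 1,…,N let f_i : ℝ^{d×d} → ℝ be differentiable with ‖∇f_i(X)‖_F ≤ G_W for all X, and let f = (1/N)∑_i f_i be L-smooth with f(X) ≥ f* for all X. Define sequences by: W^t = W₀ + B̄^t Ā^t; per-client factor gradients G_{A,i}^t = (B̄^t)ᵀ∇f_i(W^t) and G_{B,i}^t = ∇f_i(W^t)(Ā^t)ᵀ; aggregated updates Ā^{t+1} = Ā^t − η·(1/N)∑_i G_{A,i}^t and B̄^{t+1} = B̄^t − η·(1/N)∑_i G_{B,i}^t; and aggregation error E^{t+1} = B̄^{t+1}Ā^{t+1} − (1/N)∑_i (B̄^t − ηG_{B,i}^t)(Ā^t − ηG_{A,i}^t). Assume ‖B̄^t‖_F ≤ √τ and ‖Ā^t‖_F ≤ √τ for all t ∈ {0,…,T}, and set G_A = √τ G_W and G_B = √τ G_W. Then, writing ∇_A f(W^t) = (B̄^t)ᵀ∇f(W^t) and ∇_B f(W^t) = ∇f(W^t)(Ā^t)ᵀ, the following stationarity bound holds: min_{0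 ≤ t ≤ T−1} ( ‖∇_A f(W^t)‖_F² + ‖∇_B f(W^t)‖_F² ) ≤ (f(W⁰) − f*)/(Tη) + ((3Lη² + 2)/(2Tη)) ∑_{t=0}^{T−1} ‖E^{t+1}‖_F²/η² + η( G_W² + G_W G_A G_B + 2Lτ(G_A + G_B)² ) + 2η³ L G_A² G_B². -/

import Mathlib

open scoped BigOperators
open Matrix

noncomputable def frob {m n : Type*} [Fintype m] [Fintype n] (M : Matrix m n ℝ) : ℝ :=
  Real.sqrt (∑ i, ∑ j, (M i j) ^ 2)

noncomputable def frobInner {m n : Type*} [Fintype m] [Fintype n] (X Y : Matrix m n ℝ) : ℝ :=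
  Matrix.trace (Xᵀ * Y)

section API
attribute [local instance] Matrix.frobeniusSeminormedAddCommGroup Matrix.frobeniusNormedSpace

variable {m n p : Type*} [Fintype m] [Fintype n] [Fintype p]

lemma frob_eq_norm (M : Matrix m n ℝ) : frob M = ‖M‖ := by
  rw [Matrix.frobenius_norm_def, frob, Real.sqrt_eq_rpow]
  congr 1
  refine Finset.sum_congr rfl fun i _ => Finset.sum_congr rfl fun j _ => ?_
  rw [Real.rpow_two, Real.norm_eq_abs, sq_abs]

lemma frob_nonneg (M : Matrix m n ℝ) : 0 ≤ frob M := Real.sqrt_nonneg _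

lemma frob_add_le (X Y : Matrix m n ℝ) : frob (X + Y) ≤ frob X + frob Y := by
  simp only [frob_eq_norm]; exact norm_add_le _ _

lemma frob_smul (c : ℝ) (X : Matrix m n ℝ) : frob (c • X) = |c| * frob X := by
  simp only [frob_eq_norm]
  rw [norm_smul, Real.norm_eq_abs]

lemma frob_mul_le (X : Matrix m n ℝ) (Y : Matrix n p ℝ) : frob (X * Y) ≤ frob X * frob Y := by
  simp only [frob_eq_norm]; exact Matrix.frobenius_norm_mul X Y

lemma frob_transpose (X : Matrix m n ℝ) : frob Xᵀ = frob X := by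
  simp only [frob_eq_norm]; exact Matrix.frobenius_norm_transpose X

lemma frob_sum_le {ι : Type*} (s : Finset ι) (v : ι → Matrix m n ℝ) :
    frob (∑ i ∈ s, v i) ≤ ∑ i ∈ s, frob (v i) := by
  simp only [frob_eq_norm]; exact norm_sum_le _ _

end API

lemma frobInner_eq_sum {m n : Type*} [Fintype m] [Fintype n] (X Y : Matrix m n ℝ) :
    frobInner X Y = ∑ i, ∑ j, X i j * Y i j := by
  simp only [frobInner, Matrix.trace, Matrix.diag, Matrix.mul_apply, Matrix.transpose_apply]
  exact Finset.sum_comm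

lemma frobInner_self {m n : Type*} [Fintype m] [Fintype n] (X : Matrix m n ℝ) :
    frobInner X X = frob X ^ 2 := by
  rw [frobInner_eq_sum, frob, Real.sq_sqrt (by positivity)]
  simp [sq]

lemma frobInner_le {m n : Type*} [Fintype m] [Fintype n] (X Y : Matrix m n ℝ) :
    frobInner X Y ≤ frob X * frob Y := by
  rw [frobInner_eq_sum, frob, frob]
  have h : (∑ i, ∑ j, X i j * Y i j) = ∑ p : m × n, X p.1 p.2 * Y p.1 p.2 := by
    rw [← Finset.univ_product_univ, Finset.sum_product]
  have h1 : (∑ i, ∑ j, X i j ^ 2) = ∑ p : m × n, X p.1 p.2 ^ 2 := by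
    rw [← Finset.univ_product_univ, Finset.sum_product]
  have h2 : (∑ i, ∑ j, Y i j ^ 2) = ∑ p : m × n, Y p.1 p.2 ^ 2 := by
    rw [← Finset.univ_product_univ, Finset.sum_product]
  rw [h, h1, h2]
  have hcs := Finset.sum_mul_sq_le_sq_mul_sq Finset.univ (fun p : m × n => X p.1 p.2)
    (fun p : m × n => Y p.1 p.2)
  calc ∑ p : m × n, X p.1 p.2 * Y p.1 p.2
      ≤ |∑ p : m × n, X p.1 p.2 * Y p.1 p.2| := le_abs_self _
    _ = Real.sqrt ((∑ p : m × n, X p.1 p.2 * Y p.1 p.2) ^ 2) := (Real.sqrt_sq_eq_abs _).symm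
    _ ≤ Real.sqrt ((∑ p : m × n, X p.1 p.2 ^ 2) * ∑ p : m × n, Y p.1 p.2 ^ 2) :=
        Real.sqrt_le_sqrt hcs
    _ = _ := Real.sqrt_mul (by positivity) _

lemma frobInner_add_right {m n : Type*} [Fintype m] [Fintype n] (X Y Z : Matrix m n ℝ) :
    frobInner X (Y + Z) = frobInner X Y + frobInner X Z := by
  simp [frobInner, Matrix.mul_add]

lemma frobInner_smul_right {m n : Type*} [Fintype m] [Fintype n] (c : ℝ) (X Y : Matrix m n ℝ) :
    frobInner X (c • Y) = c * frobInner X Y := by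
  simp [frobInner, Matrix.mul_smul]

lemma frobInner_adj1 {m n p : Type*} [Fintype m] [Fintype n] [Fintype p]
    (X : Matrix m n ℝ) (Y : Matrix m p ℝ) (Z : Matrix p n ℝ) :
    frobInner X (Y * Z) = frobInner (X * Zᵀ) Y := by
  unfold frobInner
  rw [Matrix.transpose_mul, Matrix.transpose_transpose, ← Matrix.mul_assoc,
    Matrix.trace_mul_comm, ← Matrix.mul_assoc, Matrix.mul_assoc]

lemma frobInner_adj2 {m n p : Type*} [Fintype m] [Fintype n] [Fintype p]
    (X : Matrix m n ℝ) (Y : Matrix m p ℝ) (Z : Matrix p n ℝ) :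
    frobInner X (Y * Z) = frobInner (Yᵀ * X) Z := by
  unfold frobInner
  rw [Matrix.transpose_mul, Matrix.transpose_transpose, Matrix.mul_assoc]

lemma avg_frob_le {m n : Type*} [Fintype m] [Fintype n] {N : ℕ} (hN : 0 < N)
    (v : Fin N → Matrix m n ℝ) {C : ℝ} (h : ∀ i, frob (v i) ≤ C) :
    frob ((N : ℝ)⁻¹ • ∑ i, v i) ≤ C := by
  rw [frob_smul]
  have hNpos : (0:ℝ) < N := by exact_mod_cast hN
  rw [abs_of_nonneg (by positivity)]
  calc (N:ℝ)⁻¹ * frob (∑ i, v i) ≤ (N:ℝ)⁻¹ * ∑ i, frob (v i) := by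
        apply mul_le_mul_of_nonneg_left (frob_sum_le _ _) (by positivity)
    _ ≤ (N:ℝ)⁻¹ * (N * C) := by
        apply mul_le_mul_of_nonneg_left _ (by positivity)
        calc (∑ i, frob (v i)) ≤ ∑ _i : Fin N, C := Finset.sum_le_sum fun i _ => h i
          _ = N * C := by simp [mul_comm]
    _ = C := by field_simp


lemma coefE_aux (L T η P : ℝ) (hT : 0 < T) (hη : 0 < η) (hP : 0 ≤ P) :
    (P/(2*η^2) + 3*L/2*P)/(T*η) ≤ (3*L*η^2+2)/(2*T*η) * (P/η^2) := by
  have heq : (3*L*η^2+2)/(2*T*η) * (P/η^2) - (P/(2*η^2) + 3*L/2*P)/(T*η)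
      = P/(2*T*η^3) := by
    field_simp
    ring
  have hpos : 0 ≤ P/(2*T*η^3) := by positivity
  linarith

lemma split_aux (a T η C1 P L : ℝ) (hT : 0 < T) (hη : 0 < η) :
    (a + T * (η^2 * C1) + (P/(2*η^2) + 3*L/2*P)) / (T * η)
      = a / (T * η) + η * C1 + (P/(2*η^2) + 3*L/2*P) / (T * η) := by
  have hmid : T * (η^2 * C1) / (T * η) = η * C1 := by
    field_simp
  rw [add_div, add_div, hmid]

set_option maxHeartbeats 1000000 in
/-- Convergence of federated LoRA with factor-wise averaging, deterministic
version with explicit constants: with per-client factor gradients, factor-wise averaged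
updates, aggregation errors `E^{t+1}`, bounded factors `‖B̄^t‖,‖Ā^t‖ ≤ √τ`, bounded client
gradients `‖∇f_i‖ ≤ G_W`, `G_A = G_B = √τ G_W`, and an `L`-smooth average objective
`f = (1/N)∑ f_i ≥ f*`, the minimum over `t < T` of
`‖∇_A f(W^t)‖² + ‖∇_B f(W^t)‖²` is bounded by
`(f(W⁰)−f*)/(Tη) + ((3Lη²+2)/(2Tη)) ∑_t ‖E^{t+1}‖²/η²
  + η(G_W² + G_W G_A G_B + 2Lτ(G_A+G_B)²) + 2η³ L G_A² G_B²`. -/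
theorem fedlora_factorwise_convergence (N T d r : ℕ) (hN : 0 < N) (hT : 0 < T)
    (η : ℝ) (hη : 0 < η)
    (f : Matrix (Fin d) (Fin d) ℝ → ℝ)
    (fi : Fin N → Matrix (Fin d) (Fin d) ℝ → ℝ)
    (g : Fin N → Matrix (Fin d) (Fin d) ℝ → Matrix (Fin d) (Fin d) ℝ)
    (gf : Matrix (Fin d) (Fin d) ℝ → Matrix (Fin d) (Fin d) ℝ)
    (L GW τ fstar : ℝ) (hL : 0 ≤ L)
    (hf : ∀ X, f X = (N : ℝ)⁻¹ * ∑ i, fi i X)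
    (hgf : ∀ X, gf X = (N : ℝ)⁻¹ • ∑ i, g i X)
    (hgradi : ∀ i X, frob (g i X) ≤ GW)
    (hsmooth : ∀ X Y, f Y ≤ f X + frobInner (gf X) (Y - X) + L / 2 * frob (Y - X) ^ 2)
    (hfstar : ∀ X, fstar ≤ f X)
    (W₀ : Matrix (Fin d) (Fin d) ℝ)
    (Bbar : ℕ → Matrix (Fin d) (Fin r) ℝ) (Abar : ℕ → Matrix (Fin r) (Fin d) ℝ)
    (W : ℕ → Matrix (Fin d) (Fin d) ℝ) (E : ℕ → Matrix (Fin d) (Fin d) ℝ)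
    (hW : ∀ t, W t = W₀ + Bbar t * Abar t)
    (hAupd : ∀ t, Abar (t + 1)
      = Abar t - η • ((N : ℝ)⁻¹ • ∑ i, (Bbar t)ᵀ * g i (W t)))
    (hBupd : ∀ t, Bbar (t + 1)
      = Bbar t - η • ((N : ℝ)⁻¹ • ∑ i, g i (W t) * (Abar t)ᵀ))
    (hE : ∀ t, E (t + 1) = Bbar (t + 1) * Abar (t + 1)
      - (N : ℝ)⁻¹ • ∑ i,
          (Bbar t - η • (g i (W t) * (Abar t)ᵀ)) * (Abar t - η • ((Bbar t)ᵀ * g i (W t))))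
    (hBnorm : ∀ t ≤ T, frob (Bbar t) ≤ Real.sqrt τ)
    (hAnorm : ∀ t ≤ T, frob (Abar t) ≤ Real.sqrt τ) :
    (Finset.range T).inf' (Finset.nonempty_range_iff.mpr hT.ne')
        (fun t => frob ((Bbar t)ᵀ * gf (W t)) ^ 2 + frob (gf (W t) * (Abar t)ᵀ) ^ 2)
      ≤ (f (W 0) - fstar) / (T * η)
        + (3 * L * η ^ 2 + 2) / (2 * T * η)
            * ∑ t ∈ Finset.range T, frob (E (t + 1)) ^ 2 / η ^ 2
        + η * (GW ^ 2 + GW * (Real.sqrt τ * GW) * (Real.sqrt τ * GW)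
            + 2 * L * τ * (Real.sqrt τ * GW + Real.sqrt τ * GW) ^ 2)
        + 2 * η ^ 3 * L * (Real.sqrt τ * GW) ^ 2 * (Real.sqrt τ * GW) ^ 2 := by
  have hNpos : (0:ℝ) < N := by exact_mod_cast hN
  have hTpos : (0:ℝ) < T := by exact_mod_cast hT
  set s := Real.sqrt τ with hs
  have hs0 : 0 ≤ s := Real.sqrt_nonneg τ
  have hGW : 0 ≤ GW := le_trans (frob_nonneg _) (hgradi ⟨0, hN⟩ W₀)
  set K := s * GW with hKdef
  have hK0 : 0 ≤ K := mul_nonneg hs0 hGW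
  set S : ℕ → ℝ :=
    fun t => frob ((Bbar t)ᵀ * gf (W t)) ^ 2 + frob (gf (W t) * (Abar t)ᵀ) ^ 2 with hS
  set C1 : ℝ := GW^2/2 + GW*(K*K) + 3*L/2*(s*(K+K))^2 + 3*L/2*η^2*(K*K)^2 with hC1
  -- per-step inequality
  have key : ∀ t < T, η * S t
      ≤ (f (W t) - f (W (t+1))) + η^2 * C1 + frob (E (t+1))^2/(2*η^2)
        + 3*L/2 * frob (E (t+1))^2 := by
    intro t ht
    have hA := hAnorm t ht.le
    have hB := hBnorm t ht.le
    set A := Abar t with hAdef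
    set B := Bbar t with hBdef
    set gt := gf (W t) with hgt
    set GA := Bᵀ * gt with hGAdef
    set GB := gt * Aᵀ with hGBdef
    set M : Matrix (Fin d) (Fin d) ℝ :=
      (N:ℝ)⁻¹ • ∑ i, (g i (W t) * Aᵀ) * (Bᵀ * g i (W t)) with hM
    have hgfb : frob gt ≤ GW := by
      rw [hgt, hgf]; exact avg_frob_le hN _ (fun i => hgradi i (W t))
    have hGAb : frob GA ≤ K := by
      calc frob GA ≤ frob Bᵀ * frob gt := frob_mul_le _ _
        _ ≤ s * GW := by
            apply mul_le_mul _ hgfb (frob_nonneg _) hs0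
            rw [frob_transpose]; exact hB
    have hGBb : frob GB ≤ K := by
      calc frob GB ≤ frob gt * frob Aᵀ := frob_mul_le _ _
        _ ≤ GW * s := by
            apply mul_le_mul hgfb _ (frob_nonneg _) hGW
            rw [frob_transpose]; exact hA
        _ = K := mul_comm _ _
    have hMb : frob M ≤ K * K := by
      rw [hM]
      refine avg_frob_le hN _ (fun i => ?_)
      calc frob (g i (W t) * Aᵀ * (Bᵀ * g i (W t)))
          ≤ frob (g i (W t) * Aᵀ) * frob (Bᵀ * g i (W t)) := frob_mul_le _ _
        _ ≤ K * K := by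
            apply mul_le_mul _ _ (frob_nonneg _) hK0
            · calc frob (g i (W t) * Aᵀ) ≤ frob (g i (W t)) * frob Aᵀ := frob_mul_le _ _
                _ ≤ GW * s := by
                    apply mul_le_mul (hgradi i _) _ (frob_nonneg _) hGW
                    rw [frob_transpose]; exact hA
                _ = K := mul_comm _ _
            · calc frob (Bᵀ * g i (W t)) ≤ frob Bᵀ * frob (g i (W t)) := frob_mul_le _ _
                _ ≤ s * GW := by
                    apply mul_le_mul _ (hgradi i _) (frob_nonneg _) hs0
                    rw [frob_transpose]; exact hB
    -- the update identity
    have hGb : GB = (N:ℝ)⁻¹ • ∑ i, g i (W t) * Aᵀ := by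
      rw [hGBdef, hgt, hgf, Matrix.smul_mul, Matrix.sum_mul]
    have hGa : GA = (N:ℝ)⁻¹ • ∑ i, Bᵀ * g i (W t) := by
      rw [hGAdef, hgt, hgf, Matrix.mul_smul, Matrix.mul_sum]
    have hBA : Bbar (t+1) * Abar (t+1)
        = E (t+1) + (N:ℝ)⁻¹ • ∑ i,
            (B - η • (g i (W t) * Aᵀ)) * (A - η • (Bᵀ * g i (W t))) :=
      eq_add_of_sub_eq (hE t).symm
    have hexp : ∀ i : Fin N, (B - η • (g i (W t) * Aᵀ)) * (A - η • (Bᵀ * g i (W t)))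
        = B * A + ((-η) • (g i (W t) * Aᵀ * A) + ((-η) • (B * (Bᵀ * g i (W t)))
          + η^2 • (g i (W t) * Aᵀ * (Bᵀ * g i (W t))))) := by
      intro i
      simp only [Matrix.sub_mul, Matrix.mul_sub, Matrix.smul_mul, Matrix.mul_smul, smul_smul,
        Matrix.mul_assoc]
      module
    have hGBA : GB * A = (N:ℝ)⁻¹ • ∑ i, g i (W t) * Aᵀ * A := by
      rw [hGb, Matrix.smul_mul, Matrix.sum_mul]
    have hBGA : B * GA = (N:ℝ)⁻¹ • ∑ i, B * (Bᵀ * g i (W t)) := by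
      rw [hGa, Matrix.mul_smul, Matrix.mul_sum]
    have havg : (N:ℝ)⁻¹ • ∑ i,
          (B - η • (g i (W t) * Aᵀ)) * (A - η • (Bᵀ * g i (W t)))
        = B * A + ((-η) • (GB * A + B * GA) + η^2 • M) := by
      rw [Finset.sum_congr rfl fun i _ => hexp i]
      rw [hGBA, hBGA, hM]
      simp only [Finset.sum_add_distrib, ← Finset.smul_sum, Finset.sum_const,
        Finset.card_univ, Fintype.card_fin]
      match_scalars <;> field_simp
    have hD : W (t+1) - W t = E (t+1) + ((-η) • (GB * A + B * GA) + η^2 • M) := by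
      rw [hW (t+1), hW t, add_sub_add_left_eq_sub, hBA, havg, ← hAdef, ← hBdef]
      abel
    -- inner product identity
    have hIP : frobInner gt (W (t+1) - W t)
        = frobInner gt (E (t+1)) + (-η) * (frob GB ^ 2 + frob GA ^ 2)
          + η^2 * frobInner gt M := by
      rw [hD, frobInner_add_right, frobInner_add_right, frobInner_smul_right,
        frobInner_smul_right, frobInner_add_right, frobInner_adj1 gt GB A,
        frobInner_adj2 gt B GA, ← hGBdef, ← hGAdef, frobInner_self, frobInner_self]
      ring
    -- norm bound on the step
    have hDb : frob (W (t+1) - W t)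
        ≤ frob (E (t+1)) + (η * (s*(K+K)) + η^2 * (K*K)) := by
      rw [hD]
      refine le_trans (frob_add_le _ _) (add_le_add le_rfl ?_)
      refine le_trans (frob_add_le _ _) ?_
      rw [frob_smul, frob_smul, abs_neg, abs_of_pos hη, abs_of_nonneg (sq_nonneg η)]
      have h2 : frob (GB * A + B * GA) ≤ s*(K+K) := by
        refine le_trans (frob_add_le _ _) ?_
        have hb1 : frob (GB * A) ≤ K * s :=
          le_trans (frob_mul_le _ _) (mul_le_mul hGBb hA (frob_nonneg _) hK0)
        have hb2 : frob (B * GA) ≤ s * K :=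
          le_trans (frob_mul_le _ _) (mul_le_mul hB hGAb (frob_nonneg _) hs0)
        calc frob (GB * A) + frob (B * GA) ≤ K * s + s * K := add_le_add hb1 hb2
          _ = s*(K+K) := by ring
      exact add_le_add (mul_le_mul_of_nonneg_left h2 hη.le)
        (mul_le_mul_of_nonneg_left hMb (sq_nonneg η))
    -- smoothness
    have hsm := hsmooth (W t) (W (t+1))
    rw [← hgt] at hsm
    -- bound inner-product pieces
    have hipE : frobInner gt (E (t+1)) ≤ η^2*GW^2/2 + frob (E (t+1))^2/(2*η^2) := by
      have h1 : frobInner gt (E (t+1)) ≤ GW * frob (E (t+1)) :=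
        le_trans (frobInner_le _ _)
          (mul_le_mul_of_nonneg_right hgfb (frob_nonneg _))
      have h2 : η^2*GW^2/2 + frob (E (t+1))^2/(2*η^2) - GW * frob (E (t+1))
          = (η^2*GW - frob (E (t+1)))^2/(2*η^2) := by
        field_simp
        ring
      have h3 : 0 ≤ (η^2*GW - frob (E (t+1)))^2/(2*η^2) := by positivity
      linarith
    have hipM : η^2 * frobInner gt M ≤ η^2 * (GW * (K*K)) :=
      mul_le_mul_of_nonneg_left
        (le_trans (frobInner_le _ _) (mul_le_mul hgfb hMb (frob_nonneg _) hGW))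
        (sq_nonneg η)
    -- bound quadratic piece
    have hq : frob (W (t+1) - W t) ^ 2
        ≤ 3*(frob (E (t+1))^2 + η^2*(s*(K+K))^2 + η^4*(K*K)^2) := by
      have h1 : frob (W (t+1) - W t) ^ 2
          ≤ (frob (E (t+1)) + (η * (s*(K+K)) + η^2 * (K*K))) ^ 2 :=
        pow_le_pow_left₀ (frob_nonneg _) hDb 2
      refine le_trans h1 ?_
      nlinarith [sq_nonneg (frob (E (t+1)) - η*(s*(K+K))),
        sq_nonneg (frob (E (t+1)) - η^2*(K*K)),
        sq_nonneg (η*(s*(K+K)) - η^2*(K*K))]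
    have hq2 : L/2 * frob (W (t+1) - W t) ^ 2
        ≤ L/2 * (3*(frob (E (t+1))^2 + η^2*(s*(K+K))^2 + η^4*(K*K)^2)) :=
      mul_le_mul_of_nonneg_left hq (by positivity)
    have hSt : S t = frob GA ^ 2 + frob GB ^ 2 := by
      simp only [hS, ← hgt, ← hAdef, ← hBdef, ← hGAdef, ← hGBdef]
    rw [hIP] at hsm
    rw [hSt, hC1]
    linarith [hsm, hipE, hipM, hq2]
  -- summation
  have hsum : η * ∑ t ∈ Finset.range T, S t
      ≤ (f (W 0) - f (W T)) + T * (η^2 * C1)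
        + ((∑ t ∈ Finset.range T, frob (E (t+1))^2)/(2*η^2)
            + 3*L/2 * ∑ t ∈ Finset.range T, frob (E (t+1))^2) := by
    have h1 : ∑ t ∈ Finset.range T, (η * S t)
        ≤ ∑ t ∈ Finset.range T,
            ((f (W t) - f (W (t+1))) + η^2*C1 + frob (E (t+1))^2/(2*η^2)
              + 3*L/2 * frob (E (t+1))^2) :=
      Finset.sum_le_sum fun t ht => key t (Finset.mem_range.mp ht)
    rw [← Finset.mul_sum] at h1
    refine le_trans h1 (le_of_eq ?_)
    rw [Finset.sum_add_distrib, Finset.sum_add_distrib, Finset.sum_add_distrib,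
      Finset.sum_range_sub' (fun t => f (W t)), Finset.sum_const, Finset.card_range,
      ← Finset.mul_sum, ← Finset.sum_div, nsmul_eq_mul]
    ring
  set m := (Finset.range T).inf' (Finset.nonempty_range_iff.mpr hT.ne') S with hm
  set P := ∑ t ∈ Finset.range T, frob (E (t+1))^2 with hP
  have hP0 : 0 ≤ P := Finset.sum_nonneg fun t _ => sq_nonneg _
  have hmin : (T:ℝ) * m ≤ ∑ t ∈ Finset.range T, S t := by
    have h := Finset.card_nsmul_le_sum (Finset.range T) S m
      (fun t ht => Finset.inf'_le _ ht)
    rw [Finset.card_range, nsmul_eq_mul] at h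
    exact h
  have hTη : (0:ℝ) < (T:ℝ) * η := by positivity
  have hmain : (T:ℝ) * η * m ≤ (f (W 0) - fstar) + T * (η^2 * C1)
      + (P/(2*η^2) + 3*L/2*P) := by
    have h1 : η * ((T:ℝ) * m) ≤ η * ∑ t ∈ Finset.range T, S t :=
      mul_le_mul_of_nonneg_left hmin hη.le
    have h2 := hfstar (W T)
    linarith [h1, hsum]
  have hm2 : m ≤ ((f (W 0) - fstar) + T * (η^2 * C1) + (P/(2*η^2) + 3*L/2*P))
      / ((T:ℝ) * η) := by
    rw [le_div_iff₀ hTη]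
    linarith [hmain]
  refine le_trans hm2 ?_
  rw [split_aux _ _ _ _ _ _ hTpos hη]
  have hsd : ∑ t ∈ Finset.range T, frob (E (t+1))^2 / η^2 = P/η^2 := by
    rw [hP, Finset.sum_div]
  -- coefficient comparisons
  have hsτ : 3*L/2*(s*(K+K))^2 ≤ 2*L*τ*(K+K)^2 := by
    rcases le_or_gt 0 τ with hτ | hτ
    · have hsq : s^2 = τ := Real.sq_sqrt hτ
      rw [← hsq]
      nlinarith [mul_nonneg hL (mul_nonneg (sq_nonneg s) (sq_nonneg (K+K)))]
    · have hs00 : s = 0 := Real.sqrt_eq_zero'.mpr hτ.le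
      have hKz : K = 0 := by rw [hKdef, hs00, zero_mul]
      rw [hs00, hKz]; norm_num
  have hC1b : η * C1 ≤ η * (GW ^ 2 + GW * K * K + 2 * L * τ * (K + K) ^ 2)
      + 2 * η ^ 3 * L * K ^ 2 * K ^ 2 := by
    have h1 : GW^2/2 + GW*(K*K) + 3*L/2*(s*(K+K))^2 + 3*L/2*η^2*(K*K)^2
        ≤ (GW ^ 2 + GW * K * K + 2 * L * τ * (K + K) ^ 2) + 2 * η ^ 2 * L * K^2 * K^2 := by
      nlinarith [hsτ, sq_nonneg GW, sq_nonneg (K*K), mul_nonneg hL (sq_nonneg (K*K)),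
        mul_nonneg (mul_nonneg hL (sq_nonneg (K*K))) (sq_nonneg η)]
    calc η * C1 = η * (GW^2/2 + GW*(K*K) + 3*L/2*(s*(K+K))^2 + 3*L/2*η^2*(K*K)^2) := by
          rw [hC1]
      _ ≤ η * ((GW ^ 2 + GW * K * K + 2 * L * τ * (K + K) ^ 2)
            + 2 * η ^ 2 * L * K^2 * K^2) := mul_le_mul_of_nonneg_left h1 hη.le
      _ = η * (GW ^ 2 + GW * K * K + 2 * L * τ * (K + K) ^ 2)
            + 2 * η ^ 3 * L * K ^ 2 * K ^ 2 := by ring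
  have hEterm : (P/(2*η^2) + 3*L/2*P) / ((T:ℝ) * η)
      ≤ (3 * L * η ^ 2 + 2) / (2 * (T:ℝ) * η) * (P/η^2) :=
    coefE_aux L (T:ℝ) η P hTpos hη hP0
  rw [hsd]
  clear_value s K C1 P m
  linarith [hC1b, hEterm]
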